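/- For all t ≥ 0: p(t) ∨ q(t) = true if and only if t = l·2^{i-1} + 2n + m + i - 2 for some integer l ≥ 1. Equivalently, ¬p(t) ∧ ¬q(t) = false exactly at the times t = l·2^{i-1} + 2n + m + i - 2 with l ≥ 1. -/

import Mathlib

/-- The neurons `p` and `q` fire (i.e. `p(t) ∨ q(t) = true`) exactly at the times
`t = l·2^{i-1} + 2n + m + i - 2` with `l ≥ 1`; equivalently, `¬p(t) ∧ ¬q(t)` is
`false` exactly at those times. -/
theorem stmt_7 (i n m : ℕ) (hi : 3 ≤ i) (hiodd : i % 2 = 1) (hn : 1 ≤ n) (hm : 1 ≤ m)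
    (x : ℕ → Bool)
    (hx : ∀ t, x t = true ↔
      ∃ l, 1 ≤ l ∧ l % 2 = 1 ∧ l * 2 ^ (i - 1) + 2 * n ≤ t ∧
        t ≤ (l + 1) * 2 ^ (i - 1) + 2 * n - 1)
    (z1 z2 : ℕ → Bool)
    (hz1 : ∀ t, z1 (t + (m + i - 3)) = x t)
    (hz2 : ∀ t, z2 (t + (m + i - 2)) = x t)
    (hz10 : ∀ t, t ≤ m + i - 3 → z1 t = false)
    (hz20 : ∀ t, t ≤ m + i - 2 → z2 t = false)
    (p q : ℕ → Bool) (hp0 : p 0 = false) (hq0 : q 0 = false)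
    (hp : ∀ t, p (t + 1) = (z1 t && !(z2 t)))
    (hq : ∀ t, q (t + 1) = (!(z1 t) && z2 t)) :
    ∀ t, ((p t || q t) = true ↔ ∃ l, 1 ≤ l ∧ t = l * 2 ^ (i - 1) + 2 * n + m + i - 2) ∧
      ((!(p t) && !(q t)) = false ↔ ∃ l, 1 ≤ l ∧ t = l * 2 ^ (i - 1) + 2 * n + m + i - 2) := by
  have hP : 0 < 2 ^ (i - 1) := Nat.pow_pos (by norm_num)
  set P := 2 ^ (i - 1) with hPdef
  -- toggle lemma: x changes value from u to u+1 exactly when u+1 = k*P + 2n, k ≥ 1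
  have key : ∀ u : ℕ, ((x (u+1) != x u) = true) ↔ ∃ k, 1 ≤ k ∧ u + 1 = k * P + 2 * n := by
    intro u
    constructor
    · intro hne
      by_contra hE
      push_neg at hE
      have hiff : x (u+1) = true ↔ x u = true := by
        constructor
        · intro h
          rw [hx] at h ⊢
          obtain ⟨l, h1, h2, h3, h4⟩ := h
          refine ⟨l, h1, h2, ?_, le_trans (Nat.le_succ u) h4⟩
          have hne2 := hE l h1
          have lin : ∀ A : ℕ, A + 2*n ≤ u + 1 → u + 1 ≠ A + 2*n → A + 2*n ≤ u := by
            intro A hA hB; omega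
          exact lin _ h3 hne2
        · intro h
          rw [hx] at h ⊢
          obtain ⟨l, h1, h2, h3, h4⟩ := h
          refine ⟨l, h1, h2, le_trans h3 (Nat.le_succ u), ?_⟩
          have hne2 := hE (l+1) (by omega)
          have hBpos : 0 < (l+1) * P := Nat.mul_pos (by omega) hP
          have lin : ∀ B : ℕ, 0 < B → u ≤ B + 2*n - 1 → u + 1 ≠ B + 2*n →
              u + 1 ≤ B + 2*n - 1 := by
            intro B hB h1 h2; omega
          exact lin _ hBpos h4 hne2
      have : x (u+1) = x u := by
        cases hx1 : x (u+1) <;> cases hx2 : x u <;> simp_all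
      rw [this] at hne; simp at hne
    · rintro ⟨k, hk, hku⟩
      rcases Nat.even_or_odd k with hke | hko
      · -- k even, k ≥ 2 : x (u+1) = false, x u = true
        have hk2 : k % 2 = 0 := Nat.even_iff.mp hke
        have hx1 : x (u+1) = false := by
          rw [← Bool.not_eq_true, hx]
          rintro ⟨l, h1, h2, h3, h4⟩
          rw [hku] at h3 h4
          have hlk : l ≤ k := by
            have : l * P ≤ k * P := by
              have lin : ∀ A B : ℕ, A + 2*n ≤ B + 2*n → A ≤ B := by intro A B h; omega
              exact lin _ _ h3
            exact Nat.le_of_mul_le_mul_right this hP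
          have hkl : k < l + 1 := by
            have : k * P < (l+1) * P := by
              have lin : ∀ A B : ℕ, 0 < B → A + 2*n ≤ B + 2*n - 1 → A < B := by
                intro A B hB h; omega
              exact lin _ _ (Nat.mul_pos (by omega) hP) h4
            exact lt_of_mul_lt_mul_right this (Nat.zero_le P)
          omega
        have hx2 : x u = true := by
          rw [hx]
          have hkk : k * P = (k-1) * P + P := by
            have : k = (k - 1) + 1 := by omega
            nth_rewrite 1 [this]
            rw [add_mul, one_mul]
          refine ⟨k - 1, by omega, by omega, ?_, ?_⟩
          · have lin : ∀ A : ℕ, u + 1 = A + P + 2*n → A + 2*n ≤ u := by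
              intro A h; omega
            exact lin _ (by rw [hku, hkk])
          · have : (k - 1 + 1) = k := by omega
            rw [this]
            omega
        rw [hx1, hx2]; rfl
      · -- k odd : x (u+1) = true, x u = false
        have hk2 : k % 2 = 1 := Nat.odd_iff.mp hko
        have hx1 : x (u+1) = true := by
          rw [hx]
          refine ⟨k, hk, hk2, le_of_eq hku.symm, ?_⟩
          have hkk : (k+1) * P = k * P + P := by rw [add_mul, one_mul]
          have lin : ∀ A : ℕ, u + 1 = A + 2*n → u + 1 ≤ A + P + 2*n - 1 := by
            intro A h; omega
          rw [hkk]; exact lin _ hku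
        have hx2 : x u = false := by
          rw [← Bool.not_eq_true, hx]
          rintro ⟨l, h1, h2, h3, h4⟩
          have hlk : l < k := by
            have : l * P < k * P := by
              have lin : ∀ A B : ℕ, A + 2*n ≤ u → u + 1 = B + 2*n → 0 < B → A < B := by
                intro A B hA hB hBpos; omega
              exact lin _ _ h3 hku (Nat.mul_pos (by omega) hP)
            exact lt_of_mul_lt_mul_right this (Nat.zero_le P)
          have hkl : k ≤ l + 1 := by
            have : k * P ≤ (l+1) * P := by
              have lin : ∀ A B : ℕ, 0 < B → u ≤ B + 2*n - 1 → u + 1 = A + 2*n → A ≤ B := by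
                intro A B hB h1 h2; omega
              exact lin _ _ (Nat.mul_pos (by omega) hP) h4 hku
            exact Nat.le_of_mul_le_mul_right this hP
          omega
        rw [hx1, hx2]; rfl
  have main : ∀ t, (p t || q t) = true ↔ ∃ l, 1 ≤ l ∧ t = l * P + 2 * n + m + i - 2 := by
    intro t
    cases t with
    | zero =>
      rw [hp0, hq0]
      constructor
      · intro h; simp at h
      · rintro ⟨l, hl, heq⟩
        have hlP : P ≤ l * P := by
          calc P = 1 * P := (one_mul P).symm
          _ ≤ l * P := Nat.mul_le_mul_right P hl
        exfalso
        have lin : ∀ A : ℕ, P ≤ A → (0:ℕ) = A + 2*n + m + i - 2 → False := by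
          intro A h1 h2; omega
        exact lin _ hlP heq
    | succ t =>
      rw [hp t, hq t]
      rcases Nat.lt_or_ge t (m + i - 2) with hlt | hge
      · have h1 : z1 t = false := hz10 t (by omega)
        have h2 : z2 t = false := hz20 t (by omega)
        rw [h1, h2]
        constructor
        · intro h; simp at h
        · rintro ⟨l, hl, heq⟩
          have hlP : P ≤ l * P := by
            calc P = 1 * P := (one_mul P).symm
            _ ≤ l * P := Nat.mul_le_mul_right P hl
          exfalso
          have lin : ∀ A : ℕ, P ≤ A → t + 1 = A + 2*n + m + i - 2 →
              t < m + i - 2 → 0 < P → False := by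
            intro A hA h1 h2 h3; omega
          exact lin _ hlP heq hlt hP
      · obtain ⟨u, rfl⟩ : ∃ u, t = u + (m + i - 2) := ⟨t - (m + i - 2), by omega⟩
        have h1 : z1 (u + (m + i - 2)) = x (u+1) := by
          have h : u + (m + i - 2) = (u + 1) + (m + i - 3) := by omega
          rw [h, hz1]
        have h2 : z2 (u + (m + i - 2)) = x u := hz2 u
        rw [h1, h2]
        have lin : ∀ A : ℕ, (u + 1 = A + 2*n ↔ u + (m+i-2) + 1 = A + 2*n + m + i - 2) := by
          intro A; omega
        constructor
        · intro h
          have hxne : (x (u+1) != x u) = true := by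
            cases hx1 : x (u+1) <;> cases hx2 : x u <;> simp_all
          obtain ⟨k, hk, hku⟩ := (key u).1 hxne
          exact ⟨k, hk, (lin _).1 hku⟩
        · rintro ⟨l, hl, heq⟩
          have h4 := (key u).2 ⟨l, hl, (lin _).2 heq⟩
          cases hx1 : x (u+1) <;> cases hx2 : x u <;> simp_all
  intro t
  refine ⟨main t, ?_⟩
  rw [← main t]
  cases p t <;> cases q t <;> simp
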